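/- Let A be an N×M real matrix with nonzero columns, mutual coherence μ(A), and W = diag(‖A_1‖₂,...,‖A_M‖₂). For every δ ∈ ℝ^M, ‖Aδ‖₂² ≥ (1 + μ(A))‖Wδ‖₂² − μ(A)‖Wδ‖₁². -/

import Mathlib

/-- `‖Aδ‖₂² ≥ (1+μ)‖Wδ‖₂² − μ‖Wδ‖₁²` for any `δ`, where `μ` is the mutual
coherence of `A` and `W` the diagonal matrix of column norms. -/
theorem mulVec_sq_ge_coherence_bound (N M : ℕ) (A : Matrix (Fin N) (Fin M) ℝ)
    (hcols : ∀ i : Fin M, (fun k => A k i) ≠ 0) (μ : ℝ)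
    (hμ : IsGreatest
      {r : ℝ | ∃ i j : Fin M, i < j ∧
        r = |∑ k, A k i * A k j| /
          (Real.sqrt (∑ k, (A k i) ^ 2) * Real.sqrt (∑ k, (A k j) ^ 2))} μ)
    (δ : Fin M → ℝ) :
    (1 + μ) * (∑ i, (Real.sqrt (∑ k, (A k i) ^ 2) * δ i) ^ 2) -
        μ * (∑ i, Real.sqrt (∑ k, (A k i) ^ 2) * |δ i|) ^ 2 ≤
      ∑ k, (A.mulVec δ k) ^ 2 := by
  set w : Fin M → ℝ := fun i => Real.sqrt (∑ k, (A k i) ^ 2) with hw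
  have hwsq : ∀ i, w i ^ 2 = ∑ k, (A k i) ^ 2 := fun i =>
    Real.sq_sqrt (Finset.sum_nonneg fun k _ => sq_nonneg _)
  have hwpos : ∀ i, 0 < w i := by
    intro i
    apply Real.sqrt_pos.mpr
    rcases eq_or_lt_of_le (Finset.sum_nonneg fun k _ => sq_nonneg (A k i)) with h | h
    · exfalso
      apply hcols i
      funext k
      have := (Finset.sum_eq_zero_iff_of_nonneg
        (fun k _ => sq_nonneg (A k i))).mp h.symm k (Finset.mem_univ k)
      exact pow_eq_zero_iff two_ne_zero |>.mp this
    · exact h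
  have hμ0 : 0 ≤ μ := by
    obtain ⟨i, j, hij, hr⟩ := hμ.1
    rw [hr]
    positivity
  set G : Fin M → Fin M → ℝ := fun i j => ∑ k, A k i * A k j with hG
  have hGsym : ∀ i j, G i j = G j i := fun i j =>
    Finset.sum_congr rfl fun k _ => mul_comm _ _
  have hGbound : ∀ i j : Fin M, i ≠ j → |G i j| ≤ μ * (w i * w j) := by
    intro i j hij
    have key : ∀ i j : Fin M, i < j → |G i j| ≤ μ * (w i * w j) := by
      intro i j hij
      have hm : |G i j| / (w i * w j) ≤ μ := hμ.2 ⟨i, j, hij, rfl⟩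
      have hp : 0 < w i * w j := mul_pos (hwpos i) (hwpos j)
      calc |G i j| = |G i j| / (w i * w j) * (w i * w j) := by rw [div_mul_cancel₀ _ hp.ne']
        _ ≤ μ * (w i * w j) := by
            exact mul_le_mul_of_nonneg_right hm hp.le
    rcases lt_or_gt_of_ne hij with h | h
    · exact key i j h
    · rw [hGsym]
      have := key j i h
      linarith [this, mul_comm (w i) (w j)]
  have hGd : ∀ i, G i i = w i ^ 2 := fun i => by
    rw [hwsq]; exact Finset.sum_congr rfl fun k _ => (sq (A k i)).symm
  -- expand the quadratic form
  have hQ : ∑ k, (A.mulVec δ k) ^ 2 = ∑ i, ∑ j, δ i * δ j * G i j := by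
    have : ∀ k, (A.mulVec δ k) ^ 2 = ∑ i, ∑ j, (A k i * δ i) * (A k j * δ j) := by
      intro k
      rw [sq, Matrix.mulVec, dotProduct, Finset.sum_mul_sum]
    rw [Finset.sum_congr rfl fun k _ => this k, Finset.sum_comm]
    refine Finset.sum_congr rfl fun i _ => ?_
    rw [Finset.sum_comm]
    refine Finset.sum_congr rfl fun j _ => ?_
    rw [hG, Finset.mul_sum]
    exact Finset.sum_congr rfl fun k _ => by ring
  rw [hQ]
  -- lower bound LHS as a double sum
  have hLHS : (1 + μ) * (∑ i, (w i * δ i) ^ 2) - μ * (∑ i, w i * |δ i|) ^ 2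
      = ∑ i, ∑ j, ((if i = j then (1 + μ) * (w i * δ i) ^ 2 else 0)
          - μ * ((w i * |δ i|) * (w j * |δ j|))) := by
    have h1 : (∑ i, w i * |δ i|) ^ 2
        = ∑ i, ∑ j, (w i * |δ i|) * (w j * |δ j|) := by
      rw [sq, Finset.sum_mul_sum]
    rw [h1]
    simp only [Finset.sum_sub_distrib]
    congr 1
    · rw [Finset.mul_sum]
      refine Finset.sum_congr rfl fun i _ => ?_
      rw [Finset.sum_ite_eq, if_pos (Finset.mem_univ i)]
    · rw [Finset.mul_sum]
      exact Finset.sum_congr rfl fun i _ => Finset.mul_sum _ _ _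
  rw [hLHS]
  refine Finset.sum_le_sum fun i _ => Finset.sum_le_sum fun j _ => ?_
  by_cases h : i = j
  · subst h
    simp only [eq_self_iff_true, if_true]
    have e1 : w i * |δ i| * (w i * |δ i|) = (w i * δ i) ^ 2 := by
      rw [mul_mul_mul_comm, abs_mul_abs_self]; ring
    rw [e1, hGd i]
    have e2 : (1 + μ) * (w i * δ i) ^ 2 - μ * (w i * δ i) ^ 2
        = δ i * δ i * w i ^ 2 := by ring
    linarith
  · simp only [if_neg h, zero_sub]
    have hb := hGbound i j h
    have habs : |δ i * δ j * G i j| ≤ μ * ((w i * |δ i|) * (w j * |δ j|)) := by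
      rw [abs_mul, abs_mul]
      calc |δ i| * |δ j| * |G i j| ≤ |δ i| * |δ j| * (μ * (w i * w j)) := by
            exact mul_le_mul_of_nonneg_left hb (by positivity)
        _ = μ * ((w i * |δ i|) * (w j * |δ j|)) := by ring
    linarith [neg_abs_le (δ i * δ j * G i j)]
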